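/- Let Φ₁ and Φ₂ be uniformly perturbed lattice processes with i.i.d. numbers of replicas per lattice cell given by nonnegative integer-valued random variables X₁ and X₂, both with mean 1, and replicated points placed i.i.d. uniformly in the Voronoi cell. If X₁ ≤_Lt X₂, then Φ₁ ≤_Lf Φ₂. -/

import Mathlib

open MeasureTheory ENNReal

/-- `exp (-t)` for extended-nonnegative `t`, with `exp (-∞) = 0`. -/
noncomputable def expNeg (t : ℝ≥0∞) : ℝ := if t = ∞ then 0 else Real.exp (-t.toReal)

/-- Laplace functional of a random measure `Φ` on `α` over `(Ω, P)`. -/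
noncomputable def LF {Ω α : Type*} [MeasurableSpace Ω] [MeasurableSpace α]
    (P : Measure Ω) (Φ : Ω → Measure α) (u : α → ℝ≥0∞) : ℝ :=
  ∫ ω, expNeg (∫⁻ x, u x ∂(Φ ω)) ∂P

/-- Laplace functional (LF) order. -/
def LFOrder {Ω₁ Ω₂ α : Type*} [MeasurableSpace Ω₁] [MeasurableSpace Ω₂] [MeasurableSpace α]
    (P₁ : Measure Ω₁) (Φ₁ : Ω₁ → Measure α)
    (P₂ : Measure Ω₂) (Φ₂ : Ω₂ → Measure α) : Prop :=
  ∀ u : α → ℝ≥0∞, Measurable u → LF P₁ Φ₁ u ≥ LF P₂ Φ₂ u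

/-- The lattice point `G v` for `v ∈ ℤ^d`, with generator matrix `G`. -/
noncomputable def latticePt {d : ℕ} (G : Matrix (Fin d) (Fin d) ℝ) (v : Fin d → ℤ) :
    EuclideanSpace ℝ (Fin d) :=
  (WithLp.equiv 2 (Fin d → ℝ)).symm (G.mulVec fun j => (v j : ℝ))

/-- The Voronoi cell of the lattice point `0` of the lattice generated by `G`. -/
def voronoiCell {d : ℕ} (G : Matrix (Fin d) (Fin d) ℝ) : Set (EuclideanSpace ℝ (Fin d)) :=
  {y | ∀ v : Fin d → ℤ, ‖y‖ ≤ ‖y - latticePt G v‖}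

/- ## Auxiliary lemmas -/

lemma expNeg_nonneg (t : ℝ≥0∞) : 0 ≤ expNeg t := by
  unfold expNeg; split
  · exact le_rfl
  · positivity

lemma expNeg_le_one (t : ℝ≥0∞) : expNeg t ≤ 1 := by
  unfold expNeg; split
  · norm_num
  · exact Real.exp_le_one_iff.mpr (by simp [ENNReal.toReal_nonneg])

lemma measurable_expNeg : Measurable expNeg := by
  unfold expNeg
  exact Measurable.ite (by simp [MeasurableSet.singleton, Set.setOf_eq_eq_singleton])
    measurable_const (Real.measurable_exp.comp ENNReal.measurable_toReal.neg)

/-- A family of reals in `[0,1]` is multipliable. -/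
lemma multipliable_of_Icc {ι : Type*} {a : ι → ℝ} (h0 : ∀ i, 0 ≤ a i) (h1 : ∀ i, a i ≤ 1) :
    Multipliable a := by
  classical
  set F : Finset ι → ℝ := fun s => ∏ i ∈ s, a i with hF
  have hanti : Antitone F := by
    intro s t hst
    have : ∏ i ∈ t, a i = (∏ i ∈ s, a i) * ∏ i ∈ t \ s, a i := by
      rw [← Finset.prod_union (Finset.disjoint_sdiff)]
      congr 1
      exact (Finset.union_sdiff_of_subset hst).symm
    rw [hF]
    simp only
    rw [this]
    have h01 : ∏ i ∈ t \ s, a i ≤ 1 := Finset.prod_le_one (fun i _ => h0 i) (fun i _ => h1 i)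
    have h00 : 0 ≤ ∏ i ∈ s, a i := Finset.prod_nonneg (fun i _ => h0 i)
    exact mul_le_of_le_one_right h00 h01
  have hbb : BddBelow (Set.range F) := by
    refine ⟨0, ?_⟩
    rintro x ⟨s, rfl⟩
    exact Finset.prod_nonneg (fun i _ => h0 i)
  exact ⟨_, tendsto_atTop_ciInf hanti hbb⟩

/-- Monotonicity of infinite products of reals in `[0,1]`. -/
lemma tprod_le_tprod_Icc {ι : Type*} {a b : ι → ℝ} (hba : ∀ i, b i ≤ a i)
    (hb0 : ∀ i, 0 ≤ b i) (ha1 : ∀ i, a i ≤ 1) : ∏' i, b i ≤ ∏' i, a i := by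
  classical
  have hb1 : ∀ i, b i ≤ 1 := fun i => (hba i).trans (ha1 i)
  have ha0 : ∀ i, 0 ≤ a i := fun i => (hb0 i).trans (hba i)
  have hma : Multipliable a := multipliable_of_Icc ha0 ha1
  have hmb : Multipliable b := multipliable_of_Icc hb0 hb1
  refine le_of_tendsto_of_tendsto' hmb.hasProd hma.hasProd ?_
  intro s
  exact Finset.prod_le_prod (fun i _ => hb0 i) (fun i _ => hba i)

lemma integrable_pow_nat {Ω : Type*} [MeasurableSpace Ω] (Q : Measure Ω)
    [IsProbabilityMeasure Q] {X : Ω → ℕ} (hX : Measurable X) {t : ℝ}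
    (h0 : 0 ≤ t) (h1 : t ≤ 1) : Integrable (fun ω => t ^ X ω) Q := by
  refine (integrable_const (1 : ℝ)).mono' (measurable_const.pow hX).aestronglyMeasurable ?_
  refine Filter.Eventually.of_forall (fun ω => ?_)
  rw [Real.norm_eq_abs, abs_of_nonneg (pow_nonneg h0 _)]
  exact pow_le_one₀ h0 h1

lemma tendsto_integral_pow_aux {Ω : Type*} [MeasurableSpace Ω] (Q : Measure Ω)
    [IsProbabilityMeasure Q] (X : Ω → ℕ) (hX : Measurable X) (T : ℕ → ℝ)
    (hT0 : ∀ k, 0 ≤ T k) (hT1 : ∀ k, T k ≤ 1)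
    (hTlim : Filter.Tendsto T Filter.atTop (nhds 0)) :
    Filter.Tendsto (fun k => ∫ ω, (T k) ^ X ω ∂Q) Filter.atTop
      (nhds (∫ ω, (0:ℝ) ^ X ω ∂Q)) := by
  refine tendsto_integral_of_dominated_convergence (fun _ => (1:ℝ))
    (fun k => (measurable_const.pow hX).aestronglyMeasurable)
    (integrable_const 1) (fun k => Filter.Eventually.of_forall fun ω => ?_)
    (Filter.Eventually.of_forall fun ω => ?_)
  · rw [Real.norm_eq_abs, abs_of_nonneg (pow_nonneg (hT0 k) _)]
    exact pow_le_one₀ (hT0 k) (hT1 k)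
  · exact ((continuous_pow (X ω)).tendsto 0).comp hTlim

/-- The key factor-wise comparison: the pgf inequality for `t ∈ [0,1]`. -/
lemma pgf_le {Ω₁ Ω₂ : Type*} [MeasurableSpace Ω₁] [MeasurableSpace Ω₂]
    (Q₁ : Measure Ω₁) [IsProbabilityMeasure Q₁] (Q₂ : Measure Ω₂) [IsProbabilityMeasure Q₂]
    {X₁ : Ω₁ → ℕ} {X₂ : Ω₂ → ℕ} (hX₁ : Measurable X₁) (hX₂ : Measurable X₂)
    (hLt : ∀ s : ℝ, 0 < s →
      ∫ ω, Real.exp (-(s * X₁ ω)) ∂Q₁ ≥ ∫ ω, Real.exp (-(s * X₂ ω)) ∂Q₂)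
    {t : ℝ} (h0 : 0 ≤ t) (h1 : t ≤ 1) :
    ∫ ω, t ^ X₂ ω ∂Q₂ ≤ ∫ ω, t ^ X₁ ω ∂Q₁ := by
  -- First handle positive t.
  have pos : ∀ t' : ℝ, 0 < t' → t' ≤ 1 → ∫ ω, t' ^ X₂ ω ∂Q₂ ≤ ∫ ω, t' ^ X₁ ω ∂Q₁ := by
    intro t' ht0 ht1
    rcases lt_or_eq_of_le ht1 with ht1' | rfl
    · set s : ℝ := -Real.log t' with hs
      have hspos : 0 < s := by
        have := Real.log_neg ht0 ht1'
        simpa [hs] using this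
      have key : ∀ n : ℕ, Real.exp (-(s * (n : ℝ))) = t' ^ n := by
        intro n
        have : -(s * (n : ℝ)) = (n : ℝ) * Real.log t' := by rw [hs]; ring
        rw [this, Real.exp_nat_mul, Real.exp_log ht0]
      have h := hLt s hspos
      simp only [key] at h
      exact h
    · simp
  rcases eq_or_lt_of_le h0 with rfl | h0'
  · -- t = 0: take limits along t_k = 1/(k+2) → 0.
    set T : ℕ → ℝ := fun k => (1 : ℝ) / (k + 2) with hT
    have hT0 : ∀ k, 0 < T k := by intro k; positivity
    have hT1 : ∀ k, T k ≤ 1 := by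
      intro k
      rw [hT]
      rw [div_le_one (by positivity)]
      have : (0:ℝ) ≤ (k:ℝ) := Nat.cast_nonneg k
      linarith
    have hTlim : Filter.Tendsto T Filter.atTop (nhds 0) := by
      rw [hT]
      have : Filter.Tendsto (fun k : ℕ => (k : ℝ) + 2) Filter.atTop Filter.atTop :=
        Filter.tendsto_atTop_add_const_right _ 2 tendsto_natCast_atTop_atTop
      simpa [Pi.inv_def] using this.inv_tendsto_atTop
    have h2 := tendsto_integral_pow_aux Q₂ X₂ hX₂ T (fun k => (hT0 k).le) hT1 hTlim
    have h1 := tendsto_integral_pow_aux Q₁ X₁ hX₁ T (fun k => (hT0 k).le) hT1 hTlim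
    exact le_of_tendsto_of_tendsto' h2 h1 (fun k => pos (T k) (hT0 k) (hT1 k))
  · exact pos t h0' h1

/-- For uniformly perturbed lattice processes `Φ₁, Φ₂` (lattice with
generator matrix `G`, `det G ≠ 0`; each site independently replicated an i.i.d.
number `Xᵢ` of times, mean `1`, points uniform in the translated Voronoi cell;
encoded by the factorized Laplace functional `L_Φ(u) = ∏_{v ∈ ℤ^d} G_X(q_v)`
with `q_v = (1/|V|) ∫_{V + Gv} e^{-u}`), `X₁ ≤_Lt X₂` implies `Φ₁ ≤_Lf Φ₂`. -/
theorem perturbed_lattice_LF_order {d : ℕ}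
    (G : Matrix (Fin d) (Fin d) ℝ) (hG : G.det ≠ 0)
    {Ω₁ Ω₂ Ω₁' Ω₂' : Type*} [MeasurableSpace Ω₁] [MeasurableSpace Ω₂]
    [MeasurableSpace Ω₁'] [MeasurableSpace Ω₂']
    (Q₁ : Measure Ω₁) [IsProbabilityMeasure Q₁] (Q₂ : Measure Ω₂) [IsProbabilityMeasure Q₂]
    (P₁ : Measure Ω₁') [IsProbabilityMeasure P₁] (P₂ : Measure Ω₂') [IsProbabilityMeasure P₂]
    (X₁ : Ω₁ → ℕ) (X₂ : Ω₂ → ℕ) (hX₁m : Measurable X₁) (hX₂m : Measurable X₂)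
    (hmean₁ : ∫ ω, (X₁ ω : ℝ) ∂Q₁ = 1) (hmean₂ : ∫ ω, (X₂ ω : ℝ) ∂Q₂ = 1)
    (Φ₁ : Ω₁' → Measure (EuclideanSpace ℝ (Fin d)))
    (Φ₂ : Ω₂' → Measure (EuclideanSpace ℝ (Fin d)))
    (hPL₁ : ∀ u : EuclideanSpace ℝ (Fin d) → ℝ≥0∞, Measurable u →
      LF P₁ Φ₁ u = ∏' v : Fin d → ℤ,
        ∫ ω, ((∫ y in voronoiCell G, expNeg (u (y + latticePt G v)) ∂volume) /
          (volume (voronoiCell G)).toReal) ^ (X₁ ω) ∂Q₁)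
    (hPL₂ : ∀ u : EuclideanSpace ℝ (Fin d) → ℝ≥0∞, Measurable u →
      LF P₂ Φ₂ u = ∏' v : Fin d → ℤ,
        ∫ ω, ((∫ y in voronoiCell G, expNeg (u (y + latticePt G v)) ∂volume) /
          (volume (voronoiCell G)).toReal) ^ (X₂ ω) ∂Q₂)
    (hLt : ∀ s : ℝ, 0 < s →
      ∫ ω, Real.exp (-(s * X₁ ω)) ∂Q₁ ≥ ∫ ω, Real.exp (-(s * X₂ ω)) ∂Q₂) :
    LFOrder P₁ Φ₁ P₂ Φ₂ := by
  intro u hu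
  rw [ge_iff_le, hPL₁ u hu, hPL₂ u hu]
  set q : (Fin d → ℤ) → ℝ := fun v =>
    (∫ y in voronoiCell G, expNeg (u (y + latticePt G v)) ∂volume) /
      (volume (voronoiCell G)).toReal with hq
  -- the Voronoi cell is measurable (it is closed)
  have hVmeas : MeasurableSet (voronoiCell G) := by
    have hrw : voronoiCell G = ⋂ v : Fin d → ℤ, {y | ‖y‖ ≤ ‖y - latticePt G v‖} := by
      ext y; simp [voronoiCell, Set.mem_iInter]
    rw [hrw]
    refine MeasurableSet.iInter (fun v => ?_)
    exact (isClosed_le continuous_norm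
      ((continuous_id.sub continuous_const).norm)).measurableSet
  -- q takes values in [0,1]
  have hq0 : ∀ v, 0 ≤ q v := by
    intro v
    apply div_nonneg _ ENNReal.toReal_nonneg
    exact setIntegral_nonneg hVmeas (fun y _ => expNeg_nonneg _)
  have hq1 : ∀ v, q v ≤ 1 := by
    intro v
    rcases eq_or_lt_of_le (ENNReal.toReal_nonneg (a := volume (voronoiCell G))) with hc | hc
    · rw [hq]; simp only [← hc, div_zero]; norm_num
    · have hfin : volume (voronoiCell G) < ∞ := by
        by_contra h
        rw [not_lt, top_le_iff] at h
        rw [h] at hc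
        simp at hc
      have hmeas : AEStronglyMeasurable
          (fun y => expNeg (u (y + latticePt G v)))
          (volume.restrict (voronoiCell G)) := by
        refine Measurable.aestronglyMeasurable ?_
        exact measurable_expNeg.comp (hu.comp (measurable_id.add_const _))
      have hb := norm_setIntegral_le_of_norm_le_const (C := 1)
        (f := fun y => expNeg (u (y + latticePt G v))) hfin
        (fun y _ => by
          rw [Real.norm_eq_abs, abs_of_nonneg (expNeg_nonneg _)]
          exact expNeg_le_one _)
      rw [one_mul] at hb
      rw [hq]
      refine div_le_one_of_le₀ ?_ ENNReal.toReal_nonneg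
      exact (le_abs_self _).trans (by rwa [Real.norm_eq_abs] at hb)
  -- the factors
  have hfac2_le : ∀ v, ∫ ω, (q v) ^ X₂ ω ∂Q₂ ≤ ∫ ω, (q v) ^ X₁ ω ∂Q₁ :=
    fun v => pgf_le Q₁ Q₂ hX₁m hX₂m hLt (hq0 v) (hq1 v)
  have hfac2_nonneg : ∀ v, 0 ≤ ∫ ω, (q v) ^ X₂ ω ∂Q₂ :=
    fun v => integral_nonneg (fun ω => pow_nonneg (hq0 v) _)
  have hfac1_le_one : ∀ v, ∫ ω, (q v) ^ X₁ ω ∂Q₁ ≤ 1 := by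
    intro v
    calc ∫ ω, (q v) ^ X₁ ω ∂Q₁ ≤ ∫ _, (1:ℝ) ∂Q₁ := by
          refine integral_mono (integrable_pow_nat Q₁ hX₁m (hq0 v) (hq1 v))
            (integrable_const 1) (fun ω => pow_le_one₀ (hq0 v) (hq1 v))
      _ = 1 := by simp
  exact tprod_le_tprod_Icc hfac2_le hfac2_nonneg hfac1_le_one
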